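/- Let E be a directed graph whose only hereditary and saturated subsets of E^0 are ∅ and E^0, and let α be a closed path in E. Then for every vertex v ∈ E^0 there is a path from v to a vertex of the vertex set α^0 of α. -/

import Mathlib

/-- A directed graph `E = (E⁰, E¹, r, s)`: `V` is the vertex set `E⁰`, `Edg` is the
edge set `E¹`, and `s`, `r` give the source and range of each edge. -/
structure DGraph (V : Type*) (Edg : Type*) where
  s : Edg → V
  r : Edg → V

namespace DGraph

variable {V Edg : Type*}

/-- There is an edge from `v` to `w`. -/
def Adj (G : DGraph V Edg) (v w : V) : Prop := ∃ e, G.s e = v ∧ G.r e = w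

/-- There is a path (possibly of length zero, i.e. a vertex) from `v` to `w`. -/
def Reaches (G : DGraph V Edg) : V → V → Prop := Relation.ReflTransGen G.Adj

/-- A subset `X ⊆ E⁰` is hereditary if `r(e) ∈ X` whenever `s(e) ∈ X`. -/
def Hereditary (G : DGraph V Edg) (X : Set V) : Prop := ∀ e, G.s e ∈ X → G.r e ∈ X

/-- A vertex is a finite emitter if `s⁻¹(v)` is finite and nonempty. -/
def FiniteEmitter (G : DGraph V Edg) (v : V) : Prop :=
  {e | G.s e = v}.Finite ∧ {e | G.s e = v}.Nonempty

/-- A subset `X ⊆ E⁰` is saturated if every finite emitter `v` with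
`r(s⁻¹(v)) ⊆ X` lies in `X`. -/
def Saturated (G : DGraph V Edg) (X : Set V) : Prop :=
  ∀ v, FiniteEmitter G v → (∀ e, G.s e = v → G.r e ∈ X) → v ∈ X

/-- The hereditary saturated closure of `X`: the smallest hereditary and saturated
subset of `E⁰` containing `X`. -/
def satClosure (G : DGraph V Edg) (X : Set V) : Set V :=
  ⋂₀ {Y | Hereditary G Y ∧ Saturated G Y ∧ X ⊆ Y}

/-- The consecutive edges of a path match up: `r(eᵢ) = s(eᵢ₊₁)`. -/
def IsChain (G : DGraph V Edg) (p : List Edg) : Prop :=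
  List.Chain' (fun e f => G.r e = G.s f) p

/-- `p` is a closed path (of length ≥ 1) based at `v`. -/
def IsClosedPathAt (G : DGraph V Edg) (p : List Edg) (v : V) : Prop :=
  ∃ hne : p ≠ [], IsChain G p ∧ G.s (p.head hne) = v ∧ G.r (p.getLast hne) = v

/-- `p` is a closed path (of length ≥ 1). -/
def IsClosedPath (G : DGraph V Edg) (p : List Edg) : Prop := ∃ v, IsClosedPathAt G p v

/-- The vertex set `α⁰ = {s(e₁), …, s(eₙ)}` of a path. -/
def pathVerts (G : DGraph V Edg) (p : List Edg) : Set V := {w | ∃ e ∈ p, G.s e = w}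

/-- An exit of a closed path `e₁⋯eₙ` is an edge `f` with `s(f) = s(eᵢ)` and
`f ≠ eᵢ` for some `i`. -/
def IsExitOf (G : DGraph V Edg) (f : Edg) (p : List Edg) : Prop :=
  ∃ e ∈ p, G.s f = G.s e ∧ f ≠ e

/-- `p` is a simple closed path based at `v`: a closed path whose sources are
pairwise distinct. -/
def IsSimpleClosedPathAt (G : DGraph V Edg) (p : List Edg) (v : V) : Prop :=
  IsClosedPathAt G p v ∧ (p.map G.s).Nodup

end DGraph

/-- if the only hereditary and saturated subsets of `E⁰` are `∅`
and `E⁰`, and `α` is a closed path, then every vertex reaches a vertex of `α⁰`. -/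
lemma closed_range_mem {V Edg : Type*} (G : DGraph V Edg) {p : List Edg} {v : V}
    (h : G.IsClosedPathAt p v) : ∀ e ∈ p, G.r e ∈ G.pathVerts p := by
  obtain ⟨hne, hchain, hhead, hlast⟩ := h
  intro e he
  obtain ⟨i, hi, rfl⟩ := List.getElem_of_mem he
  by_cases hi1 : i + 1 < p.length
  · have := List.isChain_iff_getElem.mp hchain i (by omega)
    exact ⟨p.get ⟨i+1, hi1⟩, List.get_mem _ _, this.symm⟩
  · have : i = p.length - 1 := by omega
    have hl : p[i] = p.getLast hne := by
      subst this; exact (List.getLast_eq_getElem hne).symm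
    rw [hl, hlast, ← hhead]
    exact ⟨p.head hne, List.head_mem hne, rfl⟩

theorem stmt3 {V Edg : Type*} (G : DGraph V Edg)
    (htriv : ∀ X : Set V, G.Hereditary X → G.Saturated X → X = ∅ ∨ X = Set.univ)
    (α : List Edg) (hα : G.IsClosedPath α) :
    ∀ v : V, ∃ w ∈ G.pathVerts α, G.Reaches v w := by
  obtain ⟨u, hcl⟩ := hα
  set Y : Set V := {x | ¬ ∃ w ∈ G.pathVerts α, G.Reaches x w} with hY
  have hher : G.Hereditary Y := by
    intro e hse hre
    obtain ⟨w, hw, hr⟩ := hre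
    exact hse ⟨w, hw, Relation.ReflTransGen.head ⟨e, rfl, rfl⟩ hr⟩
  have hsat : G.Saturated Y := by
    intro x hfe hall hx
    obtain ⟨w, hw, hr⟩ := hx
    rcases Relation.ReflTransGen.cases_head hr with rfl | ⟨c, ⟨e, hse, hre⟩, hc⟩
    · obtain ⟨e, he, hse⟩ := hw
      exact hall e hse ⟨_, closed_range_mem G hcl e he, Relation.ReflTransGen.refl⟩
    · exact hall e hse ⟨w, hw, hre ▸ hc⟩
  rcases htriv Y hher hsat with hE | hU
  · intro v
    by_contra hv
    have : v ∈ Y := hv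
    rw [hE] at this
    exact this
  · exfalso
    obtain ⟨hne, _, hhead, _⟩ := hcl
    have : u ∈ Y := hU ▸ Set.mem_univ u
    exact this ⟨u, ⟨α.head hne, List.head_mem hne, hhead⟩, Relation.ReflTransGen.refl⟩
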